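/- Let Γ be a countable group with a totally ergodic, non-trivial measure-preserving action on (X,μ). Then for μ-almost every x ∈ X, the stabilizer Γ_x is a locally finite group. -/

import Mathlib

open MeasureTheory

open Set in
lemma zero_one_dirac {X : Type*} [MeasurableSpace X] [MeasurableSpace.CountablySeparated X]
    (μ : Measure X) [IsProbabilityMeasure μ]
    (h : ∀ A : Set X, MeasurableSet A → μ A = 0 ∨ μ A = 1) :
    ∃ x : X, μ = Measure.dirac x := by
  obtain ⟨S, hSc, hSm, hSsep⟩ :=
    (exists_countable_separating X MeasurableSet univ)
  classical
  set f : Set X → Set X := fun s => if μ s = 1 then s else sᶜ with hf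
  set T : Set X := ⋂ s ∈ S, f s with hT
  have hfm : ∀ s ∈ S, MeasurableSet (f s) := by
    intro s hs
    by_cases h1 : μ s = 1 <;> simp [hf, h1, hSm s hs, (hSm s hs).compl]
  have hTm : MeasurableSet T := MeasurableSet.biInter hSc hfm
  have hfc : ∀ s ∈ S, μ (f s)ᶜ = 0 := by
    intro s hs
    by_cases h1 : μ s = 1
    · simp only [hf, if_pos h1]
      rw [prob_compl_eq_zero_iff (hSm s hs)]; exact h1
    · rcases h s (hSm s hs) with h0 | h0
      · simp [hf, if_neg h1, h0]
      · exact absurd h0 h1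
  have hTc : μ Tᶜ = 0 := by
    rw [hT, compl_iInter₂]
    exact (measure_biUnion_null_iff hSc).2 hfc
  have hT1 : μ T = 1 := by rwa [prob_compl_eq_zero_iff hTm] at hTc
  have hTne : T.Nonempty := by
    by_contra hne
    rw [not_nonempty_iff_eq_empty] at hne
    simp [hne] at hT1
  obtain ⟨x, hx⟩ := hTne
  have hsub : T ⊆ {x} := by
    intro y hy
    have : y = x := by
      refine hSsep y trivial x trivial fun s hs => ?_
      by_cases h1 : μ s = 1
      · have hy' := mem_iInter₂.1 hy s hs
        have hx' := mem_iInter₂.1 hx s hs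
        simp only [hf, if_pos h1] at hy' hx'
        simp [hy', hx']
      · have hy' := mem_iInter₂.1 hy s hs
        have hx' := mem_iInter₂.1 hx s hs
        simp only [hf, if_neg h1, Set.mem_compl_iff] at hy' hx'
        simp [hy', hx']
    exact this
  refine ⟨x, Measure.ext fun A hA => ?_⟩
  rw [Measure.dirac_apply' x hA]
  by_cases hxA : x ∈ A
  · have hTA : T ⊆ A := fun y hy => by rw [Set.mem_singleton_iff.1 (hsub hy)]; exact hxA
    have : (1 : ENNReal) ≤ μ A := hT1 ▸ measure_mono hTA
    rw [indicator_of_mem hxA]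
    exact le_antisymm prob_le_one this
  · have : A ⊆ Tᶜ := by
      intro y hy hyT
      exact hxA (by rwa [hsub hyT] at hy)
    rw [indicator_of_notMem hxA]
    exact le_antisymm (hTc ▸ measure_mono this) zero_le

/-- A subgroup `N` of `Γ` acts ergodically on `(X, μ)`. -/
def ErgodicSubgroup {Γ X : Type*} [Group Γ] [MulAction Γ X] [MeasurableSpace X]
    (μ : Measure X) (N : Subgroup Γ) : Prop :=
  ∀ A : Set X, MeasurableSet A → (∀ γ ∈ N, (fun x => γ • x) ⁻¹' A = A) →
    μ A = 0 ∨ μ A = 1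

/-- The action of `Γ` on `(X, μ)` is totally ergodic: every infinite subgroup
acts ergodically. -/
def TotallyErgodic {Γ X : Type*} [Group Γ] [MulAction Γ X] [MeasurableSpace X]
    (μ : Measure X) : Prop :=
  ∀ N : Subgroup Γ, (N : Set Γ).Infinite → ErgodicSubgroup μ N

open Set in
lemma fix_null {Γ X : Type*} [Group Γ]
    [MeasurableSpace X] [StandardBorelSpace X] [MulAction Γ X]
    (μ : Measure X) [IsProbabilityMeasure μ]
    (hte : TotallyErgodic (Γ := Γ) μ)
    (hnontriv : ∀ x : X, μ ≠ Measure.dirac x)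
    (hmeas : ∀ F : Finset Γ, MeasurableSet {x : X | ∀ γ ∈ F, γ • x = x})
    (F : Finset Γ) (hinf : ((Subgroup.closure (F : Set Γ) : Subgroup Γ) : Set Γ).Infinite) :
    μ {x : X | ∀ γ ∈ F, γ • x = x} = 0 := by
  set N : Subgroup Γ := Subgroup.closure (F : Set Γ) with hN
  set Fix : Set X := {x : X | ∀ γ ∈ F, γ • x = x} with hFix
  -- membership in Fix iff fixed by all of N
  have hFixN : ∀ x : X, x ∈ Fix ↔ ∀ γ ∈ N, γ • x = x := by
    intro x
    constructor
    · intro hx γ hγ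
      have hle : N ≤ MulAction.stabilizer Γ x := by
        rw [hN, Subgroup.closure_le]
        intro δ hδ
        exact hx δ hδ
      exact hle hγ
    · intro hx γ hγ
      exact hx γ (Subgroup.subset_closure hγ)
  -- Fix is invariant pointwise under N in the strong sense
  have hkey : ∀ γ ∈ N, ∀ x : X, γ • x ∈ Fix ↔ x ∈ Fix := by
    intro γ hγ x
    constructor
    · intro hx
      have hfix : γ • x = x := by
        have := (hFixN (γ • x)).1 hx γ⁻¹ (N.inv_mem hγ)
        rw [inv_smul_smul] at this; exact this.symm
      rwa [hfix] at hx
    · intro hx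
      rw [(hFixN x).1 hx γ hγ]
      exact hx
  have hinv : ∀ γ ∈ N, (fun x => γ • x) ⁻¹' Fix = Fix := by
    intro γ hγ
    ext x
    exact hkey γ hγ x
  rcases hte N hinf Fix (hmeas F) hinv with h0 | h1
  · exact h0
  -- if μ Fix = 1, every measurable set has measure 0 or 1, so μ is Dirac
  exfalso
  have hFc : μ Fixᶜ = 0 := by rwa [prob_compl_eq_zero_iff (hmeas F)]
  have hzo : ∀ A : Set X, MeasurableSet A → μ A = 0 ∨ μ A = 1 := by
    intro A hA
    have hinvA : ∀ γ ∈ N, (fun x => γ • x) ⁻¹' (A ∩ Fix) = A ∩ Fix := by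
      intro γ hγ
      ext x
      simp only [mem_preimage, mem_inter_iff]
      constructor
      · rintro ⟨hxa, hxf⟩
        have hx : x ∈ Fix := (hkey γ hγ x).1 hxf
        have hfix : γ • x = x := (hFixN x).1 hx γ hγ
        rw [hfix] at hxa
        exact ⟨hxa, hx⟩
      · rintro ⟨hxa, hxf⟩
        have hfix : γ • x = x := (hFixN x).1 hxf γ hγ
        rw [hfix]
        exact ⟨hxa, hxf⟩
    have hAF : μ (A ∩ Fix) = μ A := by
      apply le_antisymm (measure_mono inter_subset_left)
      calc μ A ≤ μ (A ∩ Fix) + μ Fixᶜ := by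
              apply le_trans (measure_mono ?_) (measure_union_le _ _)
              intro x hx
              by_cases hxf : x ∈ Fix
              · exact Or.inl ⟨hx, hxf⟩
              · exact Or.inr hxf
        _ = μ (A ∩ Fix) := by rw [hFc, add_zero]
    rcases hte N hinf (A ∩ Fix) (hA.inter (hmeas F)) hinvA with h | h
    · left; rw [← hAF]; exact h
    · right; rw [← hAF]; exact h
  obtain ⟨x, hx⟩ := zero_one_dirac μ hzo
  exact hnontriv x hx


/-- For a non-trivial totally ergodic action, the stabilizer of almost every point is a
locally finite group: every finite subset of the stabilizer generates a finite subgroup. -/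
theorem stmt_4 {Γ X : Type*} [Group Γ] [Countable Γ]
    [MeasurableSpace X] [StandardBorelSpace X] [MulAction Γ X]
    (μ : Measure X) [IsProbabilityMeasure μ]
    (hmp : ∀ γ : Γ, MeasurePreserving (fun x => γ • x) μ μ)
    (hte : TotallyErgodic (Γ := Γ) μ)
    (hnontriv : ∀ x : X, μ ≠ Measure.dirac x)
    (hmeas : ∀ F : Finset Γ, MeasurableSet {x : X | ∀ γ ∈ F, γ • x = x}) :
    ∀ᵐ x ∂μ, ∀ F : Finset Γ, (∀ γ ∈ F, γ ∈ MulAction.stabilizer Γ x) →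
      ((Subgroup.closure (F : Set Γ) : Subgroup Γ) : Set Γ).Finite := by
  rw [MeasureTheory.ae_all_iff]
  intro F
  by_cases hfin : ((Subgroup.closure (F : Set Γ) : Subgroup Γ) : Set Γ).Finite
  · exact Filter.Eventually.of_forall fun x _ => hfin
  · have h0 := fix_null μ hte hnontriv hmeas F hfin
    rw [MeasureTheory.ae_iff]
    apply measure_mono_null _ h0
    intro x hx
    simp only [Set.mem_setOf_eq, Classical.not_imp] at hx
    intro γ hγ
    exact hx.1 γ hγ
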